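/- Let N be ℕ-valued with pgf G_N(u) = E_{β,1}(∑_{i=1}^k λ_i(u^i − 1)t^β), and X_1, X_2, ... i.i.d. ℕ-valued with pmf Pr{X_1 = j} = β_j and pgf G_X(u), independent of N. Then the pgf of Q = ∑_{j=1}^N X_j is G_Q(u) = E_{β,1}(t^β ∑_{i=1}^k λ_i ∑_{j=0}^∞ β_j^{*i}(u^j − 1)), where β_j^{*i} = ∑_{l_1+...+l_i = j} β_{l_1}···β_{l_i} is the i-fold convolution. -/

import Mathlib

open MeasureTheory ProbabilityTheory Real

/-- The Mittag-Leffler function `E_{β,1}(z) = ∑_{n≥0} z^n/Γ(βn+1)`. -/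
noncomputable def mittagLeffler (β z : ℝ) : ℝ := ∑' n : ℕ, z ^ n / Real.Gamma (β * n + 1)

/-- `convPow b i j` is the `i`-fold convolution `b_j^{*i}` of the pmf `b` on `ℕ`. -/
def convPow (b : ℕ → ℝ) : ℕ → ℕ → ℝ
  | 0, n => if n = 0 then 1 else 0
  | i + 1, n => ∑ l ∈ Finset.range (n + 1), b l * convPow b i (n - l)

lemma convPow_nonneg {b : ℕ → ℝ} (hb : ∀ j, 0 ≤ b j) : ∀ i j, 0 ≤ convPow b i j
  | 0, j => by unfold convPow; split_ifs <;> norm_num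
  | i + 1, j => by
      rw [convPow]
      exact Finset.sum_nonneg fun l _ => mul_nonneg (hb l) (convPow_nonneg hb i _)

lemma norm_eq_self_of_nonneg {c : ℕ → ℝ} (hc : ∀ j, 0 ≤ c j) :
    (fun j => ‖c j‖) = c := funext fun j => Real.norm_of_nonneg (hc j)

lemma convPow_summable {b : ℕ → ℝ} (hb : ∀ j, 0 ≤ b j) (hbs : Summable b) :
    ∀ i, Summable (convPow b i) := by
  intro i
  induction i with
  | zero => exact (hasSum_ite_eq (0 : ℕ) (1 : ℝ)).summable
  | succ i ih =>
    have hfn : Summable fun j => ‖b j‖ := by rw [norm_eq_self_of_nonneg hb]; exact hbs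
    have hgn : Summable fun j => ‖convPow b i j‖ := by
      rw [norm_eq_self_of_nonneg (convPow_nonneg hb i)]; exact ih
    have h := (summable_norm_sum_mul_range_of_summable_norm hfn hgn).of_norm
    exact h.congr fun n => by rw [convPow]

/-- Pgf of the `i`-fold convolution. -/
lemma convPow_hasSum_pow {b : ℕ → ℝ} (hb : ∀ j, 0 ≤ b j) (hbs : Summable b)
    {u : ℝ} (hu : |u| ≤ 1) :
    ∀ i, HasSum (fun j => convPow b i j * u ^ j) ((∑' j, b j * u ^ j) ^ i) := by
  have habs : ∀ (c : ℕ → ℝ), (∀ j, 0 ≤ c j) → Summable c →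
      Summable fun j => ‖c j * u ^ j‖ := by
    intro c hc hcs
    refine hcs.of_nonneg_of_le (fun j => norm_nonneg _) (fun j => ?_)
    rw [norm_mul, Real.norm_of_nonneg (hc j), norm_pow, Real.norm_eq_abs]
    calc c j * |u| ^ j ≤ c j * 1 :=
          mul_le_mul_of_nonneg_left (pow_le_one₀ (abs_nonneg u) hu) (hc j)
      _ = c j := mul_one _
  intro i
  induction i with
  | zero =>
    have h : HasSum (fun j : ℕ => convPow b 0 j * u ^ j) (convPow b 0 0 * u ^ 0) := by
      refine hasSum_single 0 (fun j hj => ?_)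
      simp [convPow, hj]
    simpa [convPow] using h
  | succ i ih =>
    have hfn : Summable fun j => ‖b j * u ^ j‖ := habs b hb hbs
    have hgn : Summable fun j => ‖convPow b i j * u ^ j‖ :=
      habs _ (convPow_nonneg hb i) (convPow_summable hb hbs i)
    have hprod := tsum_mul_tsum_eq_tsum_sum_range_of_summable_norm hfn hgn
    have hsum : Summable fun n =>
        ∑ k ∈ Finset.range (n + 1), (b k * u ^ k) * (convPow b i (n - k) * u ^ (n - k)) :=
      (summable_norm_sum_mul_range_of_summable_norm hfn hgn).of_norm
    have hkey : ∀ n, ∑ k ∈ Finset.range (n + 1),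
        (b k * u ^ k) * (convPow b i (n - k) * u ^ (n - k)) = convPow b (i + 1) n * u ^ n := by
      intro n
      rw [convPow, Finset.sum_mul]
      refine Finset.sum_congr rfl (fun k hk => ?_)
      have hk' : k ≤ n := Nat.lt_succ_iff.mp (Finset.mem_range.mp hk)
      calc (b k * u ^ k) * (convPow b i (n - k) * u ^ (n - k))
          = b k * convPow b i (n - k) * (u ^ k * u ^ (n - k)) := by ring
        _ = b k * convPow b i (n - k) * u ^ n := by
            rw [← pow_add, Nat.add_sub_cancel' hk']
    have hsum' : Summable fun n => convPow b (i + 1) n * u ^ n := hsum.congr hkey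
    refine hsum'.hasSum_iff.mpr ?_
    have ht : ∑' n, convPow b (i + 1) n * u ^ n =
        ∑' n, ∑ k ∈ Finset.range (n + 1),
          (b k * u ^ k) * (convPow b i (n - k) * u ^ (n - k)) :=
      tsum_congr fun n => (hkey n).symm
    rw [ht, ← hprod, ih.tsum_eq, pow_succ]
    ring

/-- A bounded measurable function is integrable against a probability measure. -/
lemma integrable_of_bdd_one {α : Type*} [MeasurableSpace α] (μ : Measure α)
    [IsProbabilityMeasure μ] (f : α → ℝ) (hf : Measurable f) (hb : ∀ x, ‖f x‖ ≤ 1) :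
    Integrable f μ :=
  (integrable_const (1 : ℝ)).mono' hf.aestronglyMeasurable (ae_of_all _ hb)

/-- PGF of the compound process: if `N` has pgf
`G_N(u) = E_{β,1}(∑_{i=1}^k λ_i(u^i − 1)t^β)` and the `X_j` are i.i.d. `ℕ`-valued with pmf
`Pr{X_1 = j} = β_j`, independent of `N`, then the pgf of `Q = ∑_{j=1}^N X_j` is
`G_Q(u) = E_{β,1}(t^β ∑_{i=1}^k λ_i ∑_{j=0}^∞ β_j^{*i}(u^j − 1))`. -/
theorem stmt_12 {Ω : Type*} [MeasureSpace Ω] [IsProbabilityMeasure (ℙ : Measure Ω)]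
    (β t : ℝ) (hβ0 : 0 < β) (hβ1 : β ≤ 1) (ht : 0 < t)
    (k : ℕ) (lam : ℕ → ℝ) (hlam : ∀ i ∈ Finset.Icc 1 k, 0 < lam i)
    (N : Ω → ℕ) (X : ℕ → Ω → ℕ) (b : ℕ → ℝ)
    (hN : Measurable N) (hX : ∀ j, Measurable (X j))
    (hiid : ∀ j, IdentDistrib (X j) (X 0) (ℙ : Measure Ω) (ℙ : Measure Ω))
    (hindep : iIndepFun X (ℙ : Measure Ω))
    (hNindep : IndepFun N (fun ω => fun j => X j ω) (ℙ : Measure Ω))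
    (hpmf : ∀ j : ℕ, ((ℙ : Measure Ω) {ω | X 0 ω = j}).toReal = b j)
    -- the pgf of `N`
    (hpgfN : ∀ v : ℝ, |v| ≤ 1 → (∫ ω, v ^ (N ω)) =
      mittagLeffler β (∑ i ∈ Finset.Icc 1 k, lam i * (v ^ i - 1) * t ^ β)) :
    ∀ u : ℝ, |u| ≤ 1 →
      (∫ ω, u ^ (∑ j ∈ Finset.range (N ω), X j ω)) =
        mittagLeffler β
          (t ^ β * ∑ i ∈ Finset.Icc 1 k, lam i * ∑' j : ℕ, convPow b i j * (u ^ j - 1)) := by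
  intro u hu
  -- boundedness of `u ^ m`
  have hpow_le : ∀ m : ℕ, ‖u ^ m‖ ≤ 1 := fun m => by
    rw [norm_pow, Real.norm_eq_abs]
    exact pow_le_one₀ (abs_nonneg u) hu
  set G : ℝ := ∫ ω, u ^ (X 0 ω) with hGdef
  -- measurability of ω ↦ u ^ f ω
  have hmeas : ∀ (f : Ω → ℕ), Measurable f → Measurable (fun ω => u ^ f ω) := fun f hf =>
    (measurable_of_countable (fun m : ℕ => u ^ m)).comp hf
  have hintΩ : ∀ (f : Ω → ℕ), Measurable f → Integrable (fun ω => u ^ f ω) ℙ := fun f hf =>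
    integrable_of_bdd_one _ _ (hmeas f hf) (fun ω => hpow_le _)
  -- |G| ≤ 1
  have hG1 : |G| ≤ 1 := by
    rw [← Real.norm_eq_abs]
    calc ‖G‖ ≤ ∫ ω, ‖u ^ X 0 ω‖ := norm_integral_le_integral_norm _
      _ ≤ ∫ _ω : Ω, (1 : ℝ) :=
          integral_mono (hintΩ _ (hX 0)).norm (integrable_const 1) (fun ω => hpow_le _)
      _ = 1 := by simp
  -- pgf of a fixed number of summands
  have hA : ∀ n : ℕ, (∫ ω, u ^ (∑ j ∈ Finset.range n, X j ω)) = G ^ n := by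
    intro n
    induction n with
    | zero => simp
    | succ n ih =>
      have hSmeas : Measurable (fun ω => ∑ j ∈ Finset.range n, X j ω) :=
        Finset.measurable_sum _ (fun j _ => hX j)
      have hindS : IndepFun (∑ j ∈ Finset.range n, X j) (X n) ℙ :=
        hindep.indepFun_finsetSum_of_notMem hX Finset.notMem_range_self
      have hind2 : IndepFun (fun ω => u ^ (∑ j ∈ Finset.range n, X j ω))
          (fun ω => u ^ X n ω) ℙ := by
        have h' := hindS.comp (measurable_of_countable (fun m : ℕ => u ^ m))
          (measurable_of_countable (fun m : ℕ => u ^ m))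
        simpa [Function.comp_def, Finset.sum_apply] using h'
      have hmul := hind2.integral_mul_eq_mul_integral (hmeas _ hSmeas).aestronglyMeasurable
        (hmeas _ (hX n)).aestronglyMeasurable
      have hXn : (∫ ω, u ^ X n ω) = G :=
        ((hiid n).comp (measurable_of_countable (fun m : ℕ => u ^ m))).integral_eq
      calc (∫ ω, u ^ (∑ j ∈ Finset.range (n + 1), X j ω))
          = ∫ ω, (u ^ (∑ j ∈ Finset.range n, X j ω)) * u ^ X n ω := by
            congr 1; funext ω; rw [Finset.sum_range_succ, pow_add]
        _ = (∫ ω, u ^ (∑ j ∈ Finset.range n, X j ω)) * ∫ ω, u ^ X n ω := hmul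
        _ = G ^ n * G := by rw [ih, hXn]
        _ = G ^ (n + 1) := (pow_succ G n).symm
  -- the vector of the X's
  set V : Ω → (ℕ → ℕ) := fun ω => fun j => X j ω with hVdef
  have hV : Measurable V := measurable_pi_lambda _ hX
  set μV : Measure (ℕ → ℕ) := Measure.map V ℙ with hμV
  set μN : Measure ℕ := Measure.map N ℙ with hμN
  haveI : IsProbabilityMeasure μV := Measure.isProbabilityMeasure_map hV.aemeasurable
  haveI : IsProbabilityMeasure μN := Measure.isProbabilityMeasure_map hN.aemeasurable
  set F : (ℕ → ℕ) × ℕ → ℝ := fun p => u ^ (∑ j ∈ Finset.range p.2, p.1 j) with hFdef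
  have hFmeas : Measurable F := by
    refine (measurable_of_countable (fun m : ℕ => u ^ m)).comp ?_
    refine measurable_from_prod_countable_left (fun n => ?_)
    show Measurable fun x : ℕ → ℕ => ∑ j ∈ Finset.range n, x j
    exact Finset.measurable_sum _ (fun j _ => measurable_pi_apply j)
  have hFbdd : ∀ p, ‖F p‖ ≤ 1 := fun p => hpow_le _
  have hmap : Measure.map (fun ω => (V ω, N ω)) ℙ = μV.prod μN :=
    (indepFun_iff_map_prod_eq_prod_map_map hV.aemeasurable hN.aemeasurable).mp hNindep.symm
  have hpair : Measurable (fun ω => (V ω, N ω)) := hV.prodMk hN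
  -- main computation: reduce to the pgf of N evaluated at G
  have hmain : (∫ ω, u ^ (∑ j ∈ Finset.range (N ω), X j ω)) = ∫ ω, G ^ (N ω) := by
    calc (∫ ω, u ^ (∑ j ∈ Finset.range (N ω), X j ω))
        = ∫ ω, F (V ω, N ω) := rfl
      _ = ∫ p, F p ∂(Measure.map (fun ω => (V ω, N ω)) ℙ) :=
          (integral_map hpair.aemeasurable hFmeas.aestronglyMeasurable).symm
      _ = ∫ p, F p ∂(μV.prod μN) := by rw [hmap]
      _ = ∫ n, (∫ x, F (x, n) ∂μV) ∂μN :=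
          integral_prod_symm F (integrable_of_bdd_one _ F hFmeas hFbdd)
      _ = ∫ n, G ^ n ∂μN := by
          refine integral_congr_ae (ae_of_all _ (fun n => ?_))
          show (∫ x, F (x, n) ∂μV) = G ^ n
          have hFn : Measurable fun x : ℕ → ℕ => F (x, n) :=
            hFmeas.comp (measurable_id.prodMk measurable_const)
          have h1 : (∫ x, F (x, n) ∂μV) = ∫ ω, F (V ω, n) ∂ℙ := by
            rw [hμV]
            exact integral_map hV.aemeasurable hFn.aestronglyMeasurable
          rw [h1]
          exact hA n
      _ = ∫ ω, G ^ (N ω) := by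
          rw [hμN]
          exact integral_map hN.aemeasurable
            (measurable_of_countable (fun n : ℕ => G ^ n)).aestronglyMeasurable
  -- identification of b via the law of X 0
  set μ0 : Measure ℕ := Measure.map (X 0) ℙ with hμ0
  haveI : IsProbabilityMeasure μ0 := Measure.isProbabilityMeasure_map (hX 0).aemeasurable
  have hb_eq : ∀ m : ℕ, (μ0 {m}).toReal = b m := by
    intro m
    rw [hμ0, Measure.map_apply (hX 0) (measurableSet_singleton m)]
    exact hpmf m
  have hb0 : ∀ j, 0 ≤ b j := fun j => (hpmf j) ▸ ENNReal.toReal_nonneg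
  -- summability and total mass of b
  have hb_univ : ∑' m : ℕ, μ0 {m} = 1 := by
    have h : (Set.univ : Set ℕ) = ⋃ m : ℕ, {m} := (Set.iUnion_of_singleton ℕ).symm
    rw [← measure_univ (μ := μ0), h,
      measure_iUnion (fun i j hij => by simp [Set.disjoint_singleton, hij])
        (fun m => measurableSet_singleton m)]
  have hbs : Summable b := by
    have h : Summable fun m => (μ0 {m}).toReal :=
      ENNReal.summable_toReal (by rw [hb_univ]; exact ENNReal.one_ne_top)
    exact h.congr hb_eq
  have hb1 : ∑' j, b j = 1 := by
    have h := ENNReal.tsum_toReal_eq (f := fun m : ℕ => μ0 {m})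
      (fun m => measure_ne_top μ0 _)
    rw [hb_univ] at h
    simp only [ENNReal.toReal_one] at h
    rw [← tsum_congr hb_eq]
    exact h.symm
  -- pgf of X 0 as a power series
  have hGeq : G = ∑' j, b j * u ^ j := by
    have h1 : G = ∫ m, u ^ m ∂μ0 := by
      rw [hμ0]
      exact (integral_map (hX 0).aemeasurable
        (measurable_of_countable (fun m : ℕ => u ^ m)).aestronglyMeasurable).symm
    have h2 : (∫ m, u ^ m ∂μ0) = ∑' m, (μ0 {m}).toReal • u ^ m :=
      integral_countable'
        (integrable_of_bdd_one _ _ (measurable_of_countable _) (fun m => hpow_le m))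
    rw [h1, h2]
    exact tsum_congr fun m => by rw [smul_eq_mul, hb_eq m]
  -- the key identity for each i
  have hkey : ∀ i : ℕ, (∑' j, convPow b i j * (u ^ j - 1)) = G ^ i - 1 := by
    intro i
    have h1 := convPow_hasSum_pow hb0 hbs hu i
    have h2 := convPow_hasSum_pow hb0 hbs (u := 1) (by norm_num) i
    simp only [one_pow, mul_one] at h2
    have h3 := h1.sub h2
    have h4 : (fun j => convPow b i j * u ^ j - convPow b i j) =
        fun j => convPow b i j * (u ^ j - 1) := by funext j; ring
    rw [h4] at h3
    rw [h3.tsum_eq, hGeq, hb1, one_pow]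
  -- conclude
  rw [hmain, hpgfN G hG1]
  congr 1
  rw [Finset.mul_sum]
  refine Finset.sum_congr rfl (fun i _ => ?_)
  rw [hkey i]
  ring
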